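/- The 4×4 real symmetric matrix with unit diagonal and off-diagonal entries H₁₂ = H₁₃ = H₂₃ = 1/√2, H₁₄ = √3/2, H₂₄ = √((4+√6)/8), H₃₄ = √((4−√6)/8) is not positive semidefinite (its smallest eigenvalue is approximately −0.044984 < 0); in particular its determinant or some principal minor is negative. -/

import Mathlib

open Matrix Real

/-- The candidate Gram matrix `G(0,0,0)` with all signs positive is not positive
semidefinite. -/
theorem candidate_gram_not_psd :
    ¬ (!![1, 1 / Real.sqrt 2, 1 / Real.sqrt 2, Real.sqrt 3 / 2;
          1 / Real.sqrt 2, 1, 1 / Real.sqrt 2, Real.sqrt ((4 + Real.sqrt 6) / 8);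
          1 / Real.sqrt 2, 1 / Real.sqrt 2, 1, Real.sqrt ((4 - Real.sqrt 6) / 8);
          Real.sqrt 3 / 2, Real.sqrt ((4 + Real.sqrt 6) / 8),
            Real.sqrt ((4 - Real.sqrt 6) / 8), 1] :
        Matrix (Fin 4) (Fin 4) ℝ).PosSemidef := by
  intro h
  have key := h.dotProduct_mulVec_nonneg ![7/10, 4/5, -3/5, -1]
  simp [dotProduct, Matrix.mulVec, Fin.sum_univ_four, Matrix.cons_val_zero,
    Matrix.cons_val_one] at key
  have h2 : Real.sqrt 2 ^ 2 = 2 := Real.sq_sqrt (by norm_num)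
  have h3 : Real.sqrt 3 ^ 2 = 3 := Real.sq_sqrt (by norm_num)
  have h6 : Real.sqrt 6 ^ 2 = 6 := Real.sq_sqrt (by norm_num)
  have h6pos : (0:ℝ) ≤ Real.sqrt 6 := Real.sqrt_nonneg 6
  have h6lt : Real.sqrt 6 < 2.45 := by
    nlinarith [h6]
  have h6gt : (2.44:ℝ) < Real.sqrt 6 := by
    nlinarith [h6]
  have h2gt : (1.414:ℝ) < Real.sqrt 2 := by nlinarith [Real.sqrt_nonneg 2]
  have h3gt : (1.732:ℝ) < Real.sqrt 3 := by nlinarith [Real.sqrt_nonneg 3]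
  have hp2 : Real.sqrt ((4 + Real.sqrt 6) / 8) ^ 2 = (4 + Real.sqrt 6) / 8 :=
    Real.sq_sqrt (by linarith)
  have hq2 : Real.sqrt ((4 - Real.sqrt 6) / 8) ^ 2 = (4 - Real.sqrt 6) / 8 :=
    Real.sq_sqrt (by linarith)
  have hpgt : (0.897:ℝ) < Real.sqrt ((4 + Real.sqrt 6) / 8) := by
    nlinarith [Real.sqrt_nonneg ((4 + Real.sqrt 6) / 8)]
  have hqlt : Real.sqrt ((4 - Real.sqrt 6) / 8) < 0.4414 := by
    nlinarith [Real.sqrt_nonneg ((4 - Real.sqrt 6) / 8)]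
  have h2pos : (0:ℝ) < Real.sqrt 2 := by linarith
  have e1 : Real.sqrt (4 + Real.sqrt 6) / Real.sqrt 8 = Real.sqrt ((4 + Real.sqrt 6) / 8) :=
    (Real.sqrt_div (by linarith) 8).symm
  have e2 : Real.sqrt (4 - Real.sqrt 6) / Real.sqrt 8 = Real.sqrt ((4 - Real.sqrt 6) / 8) :=
    (Real.sqrt_div (by linarith) 8).symm
  have einv : (Real.sqrt 2)⁻¹ = Real.sqrt 2 / 2 := by
    field_simp
    exact h2.symm
  rw [e1, e2, einv] at key
  linarith [key]
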